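/- Let n, m ∈ ℤ with n ≠ m and let a, b ∈ ℝ. Let π : ℝ² → ℝ²/ℤ² denote the quotient map onto the torus. Then the intersection of the images π({(t, nt + a) : t ∈ ℝ}) and π({(t, mt + b) : t ∈ ℝ}) of the two lines of slopes n and m is a finite set of cardinality exactly |n − m|. -/

import Mathlib

/-- The quotient map `π : ℝ² → ℝ²/ℤ²` onto the two-torus. -/
noncomputable def torusQuot (p : ℝ × ℝ) : AddCircle (1 : ℝ) × AddCircle (1 : ℝ) :=
  ((p.1 : AddCircle (1 : ℝ)), (p.2 : AddCircle (1 : ℝ)))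

lemma addCircle_coe_eq_coe_iff (x y : ℝ) :
    (↑x : AddCircle (1:ℝ)) = ↑y ↔ ∃ k : ℤ, y - x = k := by
  rw [QuotientAddGroup.eq_iff_sub_mem, AddSubgroup.mem_zmultiples_iff]
  constructor
  · rintro ⟨k, hk⟩; exact ⟨-k, by simp [zsmul_eq_mul] at hk; push_cast; linarith⟩
  · rintro ⟨k, hk⟩; exact ⟨-k, by simp [zsmul_eq_mul]; linarith⟩

/-- Two lines of distinct integer slopes `n ≠ m` on the torus `ℝ²/ℤ²` intersect
in a finite set of exactly `|n − m|` points. -/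
theorem torus_lines_intersection_card (n m : ℤ) (hnm : n ≠ m) (a b : ℝ) :
    (torusQuot '' {p : ℝ × ℝ | ∃ t : ℝ, p = (t, (n : ℝ) * t + a)} ∩
        torusQuot '' {p : ℝ × ℝ | ∃ t : ℝ, p = (t, (m : ℝ) * t + b)}).Finite ∧
    (torusQuot '' {p : ℝ × ℝ | ∃ t : ℝ, p = (t, (n : ℝ) * t + a)} ∩
        torusQuot '' {p : ℝ × ℝ | ∃ t : ℝ, p = (t, (m : ℝ) * t + b)}).ncard =
      (n - m).natAbs := by
  set c : ℤ := n - m with hc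
  have hc0 : c ≠ 0 := sub_ne_zero.mpr hnm
  have hcR : ((c : ℝ)) ≠ 0 := Int.cast_ne_zero.mpr hc0
  set N : ℕ := c.natAbs with hN
  -- the parametrizing map
  set g : ℕ → AddCircle (1:ℝ) × AddCircle (1:ℝ) :=
    fun j => torusQuot ((b - a + j) / c, (n : ℝ) * ((b - a + j) / c) + a) with hg
  have key :
      torusQuot '' {p : ℝ × ℝ | ∃ t : ℝ, p = (t, (n : ℝ) * t + a)} ∩
        torusQuot '' {p : ℝ × ℝ | ∃ t : ℝ, p = (t, (m : ℝ) * t + b)} =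
      g '' (Set.Iio N) := by
    ext x
    constructor
    · rintro ⟨⟨p, hp, rfl⟩, q, hq, hpq⟩
      obtain ⟨t, rfl⟩ := hp
      obtain ⟨s, rfl⟩ := hq
      simp only [torusQuot, Prod.mk.injEq] at hpq
      obtain ⟨h1, h2⟩ := hpq
      obtain ⟨k, hk⟩ := (addCircle_coe_eq_coe_iff _ _).mp h1
      obtain ⟨l, hl⟩ := (addCircle_coe_eq_coe_iff _ _).mp h2
      -- (n-m) t = b - a + (l - m k)
      have ht : (c : ℝ) * t = b - a + ((l - m * k : ℤ) : ℝ) := by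
        rw [hc]
        push_cast
        linear_combination hl - (m : ℝ) * hk
      obtain ⟨j0, ht⟩ : ∃ j0 : ℤ, (c : ℝ) * t = b - a + (j0 : ℝ) := ⟨_, ht⟩
      have hjnn : 0 ≤ j0 % c := Int.emod_nonneg _ hc0
      have hjlt : j0 % c < (N : ℤ) := by
        rw [hN]; exact Int.emod_lt _ hc0
      obtain ⟨q, hqq⟩ : ∃ q : ℤ, j0 - j0 % c = c * q :=
        ⟨j0 / c, by rw [Int.emod_def]; ring⟩
      set j : ℕ := (j0 % c).toNat with hjdef
      have hjr : ((j : ℝ)) = ((j0 % c : ℤ) : ℝ) := by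
        have : (j : ℤ) = j0 % c := Int.toNat_of_nonneg hjnn
        exact_mod_cast this
      have hqqR : ((j0 : ℝ)) - ((j0 % c : ℤ) : ℝ) = (c : ℝ) * q := by
        exact_mod_cast congrArg (Int.cast : ℤ → ℝ) hqq
      have htj : t - (b - a + (j : ℝ)) / c = (q : ℝ) := by
        rw [hjr]
        have hdiv : (b - a + ((j0 % c : ℤ) : ℝ)) / c = t - q := by
          rw [div_eq_iff hcR]
          linear_combination -ht - hqqR
        rw [hdiv]; ring
      refine ⟨j, by simp only [Set.mem_Iio]; omega, ?_⟩
      simp only [hg, torusQuot, Prod.mk.injEq]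
      constructor
      · exact (addCircle_coe_eq_coe_iff _ _).mpr ⟨q, by linarith [htj]⟩
      · refine (addCircle_coe_eq_coe_iff _ _).mpr ⟨n * q, ?_⟩
        push_cast
        linear_combination (n : ℝ) * htj
    · rintro ⟨j, hjN, rfl⟩
      set t : ℝ := (b - a + j) / c with htdef
      have hct : (c : ℝ) * t = b - a + j := by
        rw [htdef]; field_simp
      constructor
      · exact ⟨(t, (n : ℝ) * t + a), ⟨t, rfl⟩, rfl⟩
      · refine ⟨(t, (m : ℝ) * t + b), ⟨t, rfl⟩, ?_⟩
        have h2 : ((((m:ℝ) * t + b : ℝ)) : AddCircle (1:ℝ)) =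
            (((n:ℝ) * t + a : ℝ) : AddCircle (1:ℝ)) := by
          refine (addCircle_coe_eq_coe_iff _ _).mpr ⟨j, ?_⟩
          rw [hc] at hct; push_cast at hct ⊢
          linear_combination hct
        simp only [hg, torusQuot]
        exact Prod.ext rfl h2
  have hinj : Set.InjOn g (Set.Iio N) := by
    intro j hj j' hj' hjj
    simp only [hg, torusQuot, Prod.mk.injEq] at hjj
    obtain ⟨k, hk⟩ := (addCircle_coe_eq_coe_iff _ _).mp hjj.1
    have hk' : ((j' : ℝ)) - j = c * k := by
      field_simp at hk
      linarith [hk]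
    have hZ : (j' : ℤ) - j = c * k := by exact_mod_cast hk'
    simp only [Set.mem_Iio] at hj hj'
    have habs : ((j' : ℤ) - j).natAbs < N := by omega
    have hmul : c.natAbs * k.natAbs < N := by
      rw [← Int.natAbs_mul, ← hZ]; exact habs
    have hk0 : k = 0 := by
      rcases Nat.eq_zero_or_pos k.natAbs with h | h
      · exact Int.natAbs_eq_zero.mp h
      · exfalso
        have := Nat.le_mul_of_pos_right c.natAbs h
        omega
    rw [hk0] at hZ
    omega
  rw [key]
  refine ⟨(Set.finite_Iio N).image g, ?_⟩
  rw [Set.ncard_image_of_injOn hinj]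
  rw [← Finset.coe_range, Set.ncard_coe_finset, Finset.card_range]
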